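/- (Deterministic inequality behind the stochastic model sandwich of Lemma 2.) Let f : ℝ^d → ℝ be convex and differentiable with L-Lipschitz gradient (L > 0). Let x̄ ∈ ℝ^d, F̂ ∈ ℝ, G ∈ ℝ^d, and let m : ℝ^d → ℝ satisfy m(y) ≥ F̂ + ⟪G, y − x̄⟫ for all y ∈ ℝ^d. Then for every x ∈ ℝ^d, m(x) + L‖x − x̄‖² − f(x) ≥ ( F̂ − f(x̄) ) − (1/(2L))‖G − ∇f(x̄)‖². -/

import Mathlib

open scoped RealInnerProductSpace

lemma descent_aux {d : ℕ}
    (f : EuclideanSpace ℝ (Fin d) → ℝ) (L : ℝ) (hL : 0 < L)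
    (hfdiff : Differentiable ℝ f)
    (hflip : LipschitzWith L.toNNReal (fun x => gradient f x))
    (xb x : EuclideanSpace ℝ (Fin d)) :
    f x ≤ f xb + ⟪gradient f xb, x - xb⟫ + L / 2 * ‖x - xb‖ ^ 2 := by
  set u := x - xb with hu
  set φ : ℝ → ℝ := fun t => f (xb + t • u) - t * ⟪gradient f xb, u⟫ - L / 2 * t ^ 2 * ‖u‖ ^ 2
    with hφ
  have hc : ∀ t : ℝ, HasDerivAt (fun s : ℝ => xb + s • u) u t := by
    intro t
    simpa using ((hasDerivAt_id t).smul_const u).const_add xb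
  have hcomp : ∀ t : ℝ, HasDerivAt (fun s : ℝ => f (xb + s • u))
      ⟪gradient f (xb + t • u), u⟫ t := by
    intro t
    have h1 := ((hfdiff (xb + t • u)).hasGradientAt.hasFDerivAt).comp_hasDerivAt t (hc t)
    simpa [Function.comp_def] using h1
  have hφ' : ∀ t : ℝ, HasDerivAt φ
      (⟪gradient f (xb + t • u), u⟫ - ⟪gradient f xb, u⟫ - L / 2 * (2 * t) * ‖u‖ ^ 2) t := by
    intro t
    have h2 : HasDerivAt (fun s : ℝ => s * ⟪gradient f xb, u⟫) ⟪gradient f xb, u⟫ t := by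
      simpa using (hasDerivAt_id t).mul_const ⟪gradient f xb, u⟫
    have h3 : HasDerivAt (fun s : ℝ => L / 2 * s ^ 2 * ‖u‖ ^ 2)
        (L / 2 * (2 * t) * ‖u‖ ^ 2) t := by
      have := ((hasDerivAt_pow 2 t).const_mul (L / 2)).mul_const (‖u‖ ^ 2)
      simpa [mul_comm, mul_assoc, mul_left_comm] using this
    exact ((hcomp t).sub h2).sub h3
  have hanti : AntitoneOn φ (Set.Icc 0 1) := by
    apply antitoneOn_of_deriv_nonpos (convex_Icc 0 1)
    · exact (Continuous.continuousOn (by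
        have : Continuous φ := by
          have hcont : Continuous fun s : ℝ => f (xb + s • u) :=
            hfdiff.continuous.comp (by continuity)
          rw [hφ]
          exact (hcont.sub (by fun_prop)).sub (by fun_prop)
        exact this))
    · intro t ht
      exact (hφ' t).differentiableAt.differentiableWithinAt
    · intro t ht
      rw [(hφ' t).deriv]
      rw [interior_Icc] at ht
      have ht0 : 0 ≤ t := ht.1.le
      have hcs : ⟪gradient f (xb + t • u) - gradient f xb, u⟫ ≤
          ‖gradient f (xb + t • u) - gradient f xb‖ * ‖u‖ := real_inner_le_norm _ _
      have hlip : ‖gradient f (xb + t • u) - gradient f xb‖ ≤ L * (t * ‖u‖) := by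
        have := hflip.dist_le_mul (xb + t • u) xb
        rw [dist_eq_norm] at this
        have h4 : dist (xb + t • u) xb = t * ‖u‖ := by
          rw [dist_eq_norm]
          simp [norm_smul, abs_of_nonneg ht0]
        calc ‖gradient f (xb + t • u) - gradient f xb‖ ≤ L.toNNReal * dist (xb + t • u) xb :=
              this
          _ = L * (t * ‖u‖) := by rw [h4, Real.coe_toNNReal _ hL.le]
      have hinner : ⟪gradient f (xb + t • u), u⟫ - ⟪gradient f xb, u⟫ =
          ⟪gradient f (xb + t • u) - gradient f xb, u⟫ := by
        rw [inner_sub_left]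
      rw [hinner]
      nlinarith [norm_nonneg u, mul_le_mul_of_nonneg_right hlip (norm_nonneg u)]
  have h01 := hanti (Set.left_mem_Icc.mpr zero_le_one) (Set.right_mem_Icc.mpr zero_le_one)
    zero_le_one
  simp only [hφ, zero_smul, add_zero, one_smul, zero_mul, zero_pow, mul_zero, sub_zero,
    one_mul, one_pow] at h01
  have : xb + u = x := by rw [hu]; abel
  rw [this] at h01
  linarith

/-- Deterministic inequality behind the stochastic model sandwich of Lemma 2. -/
theorem stmt_13 {d : ℕ} (hd : 1 ≤ d)
    (f : EuclideanSpace ℝ (Fin d) → ℝ) (L : ℝ) (hL : 0 < L)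
    (hfconv : ConvexOn ℝ Set.univ f)
    (hfdiff : Differentiable ℝ f)
    (hflip : LipschitzWith L.toNNReal (fun x => gradient f x))
    (xb : EuclideanSpace ℝ (Fin d)) (Fhat : ℝ) (G : EuclideanSpace ℝ (Fin d))
    (m : EuclideanSpace ℝ (Fin d) → ℝ)
    (hm : ∀ y, m y ≥ Fhat + ⟪G, y - xb⟫) :
    ∀ x, m x + L * ‖x - xb‖ ^ 2 - f x ≥
      (Fhat - f xb) - (1 / (2 * L)) * ‖G - gradient f xb‖ ^ 2 := by
  intro x
  have hdesc := descent_aux f L hL hfdiff hflip xb x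
  have hmx := hm x
  have hinner : ⟪G, x - xb⟫ - ⟪gradient f xb, x - xb⟫ = ⟪G - gradient f xb, x - xb⟫ := by
    rw [inner_sub_left]
  have hcs : -⟪G - gradient f xb, x - xb⟫ ≤ ‖G - gradient f xb‖ * ‖x - xb‖ := by
    have := real_inner_le_norm (gradient f xb - G) (x - xb)
    have hneg : ⟪gradient f xb - G, x - xb⟫ = -⟪G - gradient f xb, x - xb⟫ := by
      rw [show gradient f xb - G = -(G - gradient f xb) by abel, inner_neg_left]
    rw [hneg] at this
    calc -⟪G - gradient f xb, x - xb⟫ ≤ ‖gradient f xb - G‖ * ‖x - xb‖ := this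
      _ = ‖G - gradient f xb‖ * ‖x - xb‖ := by rw [norm_sub_rev]
  have hamgm : ‖G - gradient f xb‖ * ‖x - xb‖ ≤
      (1 / (2 * L)) * ‖G - gradient f xb‖ ^ 2 + L / 2 * ‖x - xb‖ ^ 2 := by
    have h5 : 0 ≤ (‖G - gradient f xb‖ - L * ‖x - xb‖) ^ 2 := sq_nonneg _
    have h6 : 0 < 2 * L := by linarith
    rw [div_mul_eq_mul_div, div_add' _ _ _ h6.ne', le_div_iff₀ h6]
    ring_nf
    nlinarith
  nlinarith [sq_nonneg ‖x - xb‖, hL]
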